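/- For α > 0 and 0 ≤ x, the Gaussian integral identity ∫₀^∞ e^{-αt} ∫_{x₀}^∞ y·(e^{-(y-x)²/(2t)} + e^{-(y+x)²/(2t)})/√(2πt) dy dt = (1/α)·(1/(2√(2α)) + x₀/2)·e^{-√(2α)x₀}·(e^{√(2α)x} + e^{-√(2α)x}) holds whenever 0 ≤ x < x₀. -/

import Mathlib

open MeasureTheory Real Set

lemma odd_integral_zero (g : ℝ → ℝ) (h : ∀ u, g (-u) = - g u) : ∫ u, g u = 0 := by
  have h1 : ∫ u, g (-u) = ∫ u, g u := integral_neg_eq_self g volume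
  have h2 : ∫ u, g (-u) = - ∫ u, g u := by
    simp_rw [h]; exact integral_neg g
  linarith

lemma gauss_shift (c k : ℝ) (hc : 0 < c) (hk : 0 < k) :
    IntegrableOn (fun s => Real.exp (-(c*s - k/s)^2)) (Ioi (0:ℝ)) ∧
    ∫ s in Ioi (0:ℝ), Real.exp (-(c*s - k/s)^2) = Real.sqrt π / (2*c) := by
  set q : ℝ := 4*c*k with hq
  have hq0 : 0 < q := by positivity
  set f : ℝ → ℝ := fun u => (u + Real.sqrt (u^2 + q)) / (2*c) with hfdef
  set f' : ℝ → ℝ := fun u => (1 + u / Real.sqrt (u^2 + q)) / (2*c) with hf'def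
  clear_value q f f'
  have hsq : ∀ u : ℝ, 0 < u^2 + q := fun u => add_pos_of_nonneg_of_pos (sq_nonneg u) hq0
  have hsqrtpos : ∀ u : ℝ, 0 < Real.sqrt (u^2 + q) := fun u => Real.sqrt_pos.2 (hsq u)
  have hlt : ∀ u : ℝ, |u| < Real.sqrt (u^2 + q) := by
    intro u
    rw [← Real.sqrt_sq_eq_abs]
    exact Real.sqrt_lt_sqrt (sq_nonneg u) (by linarith)
  have hfpos : ∀ u : ℝ, 0 < f u := by
    intro u
    have h1 := hlt u
    have h2 : -u ≤ |u| := neg_le_abs u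
    have h3 : 0 < u + Real.sqrt (u^2+q) := by linarith
    rw [hfdef]
    exact div_pos h3 (by linarith)
  have hderiv : ∀ u : ℝ, HasDerivAt f (f' u) u := by
    intro u
    have h1 : HasDerivAt (fun v : ℝ => v^2 + q) (2*u) u := by
      simpa using (hasDerivAt_pow 2 u).add_const q
    have h2 : HasDerivAt (fun v : ℝ => Real.sqrt (v^2 + q)) (2*u / (2 * Real.sqrt (u^2+q))) u :=
      h1.sqrt (ne_of_gt (hsq u))
    have h3 : HasDerivAt (fun v : ℝ => v + Real.sqrt (v^2+q)) (1 + 2*u/(2*Real.sqrt (u^2+q))) u :=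
      (hasDerivAt_id u).add h2
    have h4 := h3.div_const (2*c)
    rw [hfdef]
    refine h4.congr_deriv ?_
    have hs := (hsqrtpos u).ne'
    simp only [hf'def]
    field_simp
  have hf'pos : ∀ u : ℝ, 0 < f' u := by
    intro u
    have hs := hsqrtpos u
    have h2 : -(Real.sqrt (u^2+q)) < u := by
      have := neg_abs_le u; linarith [hlt u]
    have h3 : (-1 : ℝ) < u / Real.sqrt (u^2+q) := by
      rw [lt_div_iff₀ hs]; linarith
    rw [hf'def]
    exact div_pos (by linarith) (by linarith)
  have hf'le : ∀ u : ℝ, f' u ≤ 1/c := by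
    intro u
    have hs := hsqrtpos u
    have h3 : u / Real.sqrt (u^2+q) < 1 :=
      (div_lt_one hs).2 (lt_of_le_of_lt (le_abs_self u) (hlt u))
    rw [hf'def, div_le_div_iff₀ (by positivity) hc]
    nlinarith
  have hmono : StrictMono f :=
    strictMono_of_deriv_pos (fun u => by rw [(hderiv u).deriv]; exact hf'pos u)
  have hinj : InjOn f univ := hmono.injective.injOn
  have hinv : ∀ u : ℝ, c * f u - k / f u = u := by
    intro u
    have hfu := hfpos u
    have h1 : 2*c*(f u) - u = Real.sqrt (u^2+q) := by
      simp only [hfdef]; field_simp; ring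
    have h2 : (2*c*(f u) - u)^2 = u^2 + q := by
      rw [h1]; exact Real.sq_sqrt (hsq u).le
    have h3' : 4*c*(c*(f u)^2 - u*(f u) - k) = 0 := by linear_combination h2 + hq
    have h3 : c*(f u)^2 - u*(f u) - k = 0 :=
      (mul_eq_zero.1 h3').resolve_left (by positivity)
    have h4 : (c * f u - k / f u) * f u = u * f u := by
      field_simp
      linear_combination h3
    exact mul_right_cancel₀ hfu.ne' h4
  have himg : f '' univ = Ioi 0 := by
    apply Subset.antisymm
    · rintro _ ⟨u, -, rfl⟩; exact hfpos u
    · intro y hy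
      have hy0 : (0:ℝ) < y := hy
      refine ⟨c*y - k/y, trivial, ?_⟩
      have h1 : (c*y - k/y)^2 + q = (c*y + k/y)^2 := by
        rw [hq]; field_simp; ring
      have hs : Real.sqrt ((c*y - k/y)^2 + q) = c*y + k/y := by
        rw [h1]; exact Real.sqrt_sq (by positivity)
      simp only [hfdef]
      rw [hs]; field_simp; ring
  have keyfun : (fun u => |f' u| • Real.exp (-(c * f u - k / f u)^2))
      = fun u => f' u * Real.exp (-u^2) := by
    funext u; rw [smul_eq_mul, abs_of_pos (hf'pos u), hinv u]
  have hg1 : Integrable (fun u : ℝ => Real.exp (-u^2)) := by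
    simpa using integrable_exp_neg_mul_sq (one_pos)
  have hcontf' : Continuous f' := by
    rw [hf'def]
    apply Continuous.div_const
    exact continuous_const.add (continuous_id.div
      (Real.continuous_sqrt.comp (by continuity)) (fun u => (hsqrtpos u).ne'))
  have hgf : Integrable (fun u => f' u * Real.exp (-u^2)) := by
    apply (hg1.const_mul (1/c)).mono
      ((hcontf'.mul (by continuity)).aestronglyMeasurable)
    filter_upwards with u
    have h1 := hf'pos u
    have h2 := hf'le u
    have h3 := Real.exp_pos (-u^2)
    simp only [Pi.mul_apply]
    rw [Real.norm_eq_abs, Real.norm_eq_abs, abs_of_pos (by positivity),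
      abs_of_pos (by positivity)]
    nlinarith
  have keyI := integrableOn_image_iff_integrableOn_abs_deriv_smul MeasurableSet.univ
      (fun u _ => (hderiv u).hasDerivWithinAt) hinj
      (fun y => Real.exp (-(c*y - k/y)^2))
  rw [himg] at keyI
  have key := integral_image_eq_integral_abs_deriv_smul MeasurableSet.univ
      (fun u _ => (hderiv u).hasDerivWithinAt) hinj
      (fun y => Real.exp (-(c*y - k/y)^2))
  rw [himg, Measure.restrict_univ] at key
  constructor
  · rw [keyI, integrableOn_univ, keyfun]; exact hgf
  rw [key, keyfun]
  have hsplit : (fun u => f' u * Real.exp (-u^2))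
      = fun u => (1/(2*c)) * Real.exp (-u^2)
        + (u / Real.sqrt (u^2+q)) * Real.exp (-u^2) / (2*c) := by
    funext u; simp only [hf'def]; ring
  rw [hsplit]
  have hig1 : Integrable (fun u : ℝ => (1/(2*c)) * Real.exp (-u^2)) := hg1.const_mul _
  have hig2 : Integrable (fun u : ℝ => (u / Real.sqrt (u^2+q)) * Real.exp (-u^2) / (2*c)) := by
    have := hgf.sub hig1
    apply this.congr
    filter_upwards with u
    simp only [Pi.sub_apply, hf'def]; ring
  rw [integral_add hig1 hig2, integral_const_mul]
  have hgauss : ∫ u : ℝ, Real.exp (-u^2) = Real.sqrt π := by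
    simpa using integral_gaussian 1
  have hodd : ∫ u : ℝ, (u / Real.sqrt (u^2+q)) * Real.exp (-u^2) / (2*c) = 0 := by
    apply odd_integral_zero
    intro u
    rw [neg_sq]
    ring
  rw [hgauss, hodd]
  ring


lemma laplace (a b : ℝ) (ha : 0 < a) (hb : 0 < b) :
    IntegrableOn (fun t => Real.exp (-(a*t) - b^2/(2*t)) / Real.sqrt (2*π*t)) (Ioi (0:ℝ)) ∧
    ∫ t in Ioi (0:ℝ), Real.exp (-(a*t) - b^2/(2*t)) / Real.sqrt (2*π*t)
      = Real.exp (-(Real.sqrt (2*a) * b)) / Real.sqrt (2*a) := by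
  have hc₁ : 0 < Real.sqrt a := Real.sqrt_pos.2 ha
  set c₁ := Real.sqrt a with hc₁def
  have h2 : (0:ℝ) < Real.sqrt 2 := by positivity
  set k := b / Real.sqrt 2 with hkdef
  have hk : 0 < k := div_pos hb h2
  have e1 : c₁^2 = a := Real.sq_sqrt ha.le
  have e2 : (Real.sqrt 2)^2 = 2 := Real.sq_sqrt (by norm_num)
  have e3 : Real.sqrt (2*a) = Real.sqrt 2 * c₁ := by
    rw [hc₁def, ← Real.sqrt_mul (by norm_num)]
  have hderiv : ∀ s ∈ Ioi (0:ℝ), HasDerivWithinAt (fun s : ℝ => s^2) (2*s) (Ioi 0) s := by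
    intro s _
    simpa using (hasDerivAt_pow 2 s).hasDerivWithinAt
  have hinj : InjOn (fun s : ℝ => s^2) (Ioi 0) := by
    intro s hs t ht h
    simp only [mem_Ioi] at hs ht
    simp only at h
    nlinarith [sq_nonneg (s - t), sq_nonneg (s + t)]
  have himg : (fun s : ℝ => s^2) '' (Ioi 0) = Ioi 0 := by
    ext y; constructor
    · rintro ⟨s, hs, rfl⟩
      exact pow_pos (mem_Ioi.1 hs) 2
    · intro hy
      exact ⟨Real.sqrt y, Real.sqrt_pos.2 hy, Real.sq_sqrt (le_of_lt hy)⟩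
  have hpt : ∀ s ∈ Ioi (0:ℝ),
      |2*s| • (Real.exp (-(a*s^2) - b^2/(2*s^2)) / Real.sqrt (2*π*s^2))
        = (2/Real.sqrt (2*π)) * Real.exp (-(Real.sqrt (2*a) * b)) * Real.exp (-(c₁*s - k/s)^2) := by
    intro s hs
    have hs0 : (0:ℝ) < s := hs
    have h2π : (0:ℝ) < 2*π := by positivity
    have hsqrt2π : Real.sqrt (2*π*s^2) = Real.sqrt (2*π) * s := by
      rw [Real.sqrt_mul h2π.le, Real.sqrt_sq hs0.le]
    have hk2 : k^2 = b^2/2 := by rw [hkdef, div_pow, e2]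
    have h2c : 2*c₁*k = Real.sqrt (2*a) * b := by
      rw [e3, hkdef]
      field_simp
      linear_combination -e2
    have hsq2 : (c₁*s - k/s)^2 = c₁^2*s^2 - 2*c₁*k + k^2/s^2 := by
      field_simp; ring
    have hexp : -(a*s^2) - b^2/(2*s^2) = -(Real.sqrt (2*a) * b) + -((c₁*s - k/s)^2) := by
      rw [hsq2, e1, h2c, hk2]; ring
    rw [smul_eq_mul, abs_of_pos (by positivity : (0:ℝ) < 2*s), hsqrt2π, hexp, Real.exp_add]
    have hπ : (0:ℝ) < Real.sqrt (2*π) := Real.sqrt_pos.2 h2π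
    field_simp
  have key := integral_image_eq_integral_abs_deriv_smul measurableSet_Ioi hderiv hinj
      (fun t => Real.exp (-(a*t) - b^2/(2*t)) / Real.sqrt (2*π*t))
  rw [himg] at key
  have keyI := integrableOn_image_iff_integrableOn_abs_deriv_smul measurableSet_Ioi hderiv hinj
      (fun t => Real.exp (-(a*t) - b^2/(2*t)) / Real.sqrt (2*π*t))
  rw [himg] at keyI
  have hbase := gauss_shift c₁ k hc₁ hk
  constructor
  · refine keyI.2 ?_
    refine IntegrableOn.congr_fun (hbase.1.const_mul
      ((2/Real.sqrt (2*π)) * Real.exp (-(Real.sqrt (2*a) * b))))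
      (fun s hs => ?_) measurableSet_Ioi
    exact (hpt s hs).symm
  rw [key, setIntegral_congr_fun measurableSet_Ioi (fun s hs => hpt s hs),
    integral_const_mul, hbase.2]
  have h2π : (0:ℝ) < 2*π := by positivity
  have hπpos := Real.pi_pos
  have hsπ : Real.sqrt (2*π) = Real.sqrt 2 * Real.sqrt π := Real.sqrt_mul (by norm_num) π
  rw [e3, hsπ]
  have hπ0 : (0:ℝ) < Real.sqrt π := Real.sqrt_pos.2 hπpos
  field_simp

lemma exp_moment (c r : ℝ) (hc : 0 < c) (hr : 0 ≤ r) :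
    IntegrableOn (fun y => y * Real.exp (-(c*y))) (Ioi r) ∧
    ∫ y in Ioi r, y * Real.exp (-(c*y)) = (r/c + 1/c^2) * Real.exp (-(c*r)) := by
  set F : ℝ → ℝ := fun y => -(y/c + 1/c^2) * Real.exp (-(c*y)) with hF
  have hd : ∀ y : ℝ, HasDerivAt F (y * Real.exp (-(c*y))) y := by
    intro y
    have h1 : HasDerivAt (fun y : ℝ => -(c*y)) (-c) y := by
      have := ((hasDerivAt_id y).const_mul c).neg
      simp at this
      exact this
    have h2 : HasDerivAt (fun y : ℝ => Real.exp (-(c*y))) (Real.exp (-(c*y)) * (-c)) y := h1.exp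
    have h3 : HasDerivAt (fun y : ℝ => -(y/c + 1/c^2)) (-(1/c)) y := by
      have := (((hasDerivAt_id y).div_const c).add_const (1/c^2)).neg
      exact this
    have h4 := h3.mul h2
    rw [hF]
    refine h4.congr_deriv ?_
    field_simp
    ring
  have hcont : Continuous F := by
    rw [hF]
    continuity
  have h1 : Filter.Tendsto (fun y : ℝ => y * Real.exp (-(c*y))) Filter.atTop (nhds 0) := by
    have h0 : Filter.Tendsto (fun y : ℝ => c*y) Filter.atTop Filter.atTop :=
      Filter.Tendsto.const_mul_atTop hc Filter.tendsto_id
    have ha := (tendsto_pow_mul_exp_neg_atTop_nhds_zero 1).comp h0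
    have hb := ha.const_mul (1/c)
    rw [mul_zero] at hb
    apply hb.congr
    intro y
    simp only [Function.comp_apply, pow_one]
    field_simp
  have h2 : Filter.Tendsto (fun y : ℝ => Real.exp (-(c*y))) Filter.atTop (nhds 0) := by
    apply Real.tendsto_exp_atBot.comp
    exact Filter.tendsto_neg_atTop_atBot.comp
      (Filter.Tendsto.const_mul_atTop hc Filter.tendsto_id)
  have htend : Filter.Tendsto F Filter.atTop (nhds 0) := by
    have := ((h1.const_mul (1/c)).add (h2.const_mul (1/c^2))).neg
    simp only [mul_zero, add_zero, neg_zero] at this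
    apply this.congr
    intro y
    rw [hF]
    ring
  have hnn : ∀ y ∈ Ioi r, 0 ≤ y * Real.exp (-(c*y)) := fun y hy =>
    mul_nonneg (le_trans hr (le_of_lt hy)) (Real.exp_pos _).le
  constructor
  · exact integrableOn_Ioi_deriv_of_nonneg hcont.continuousWithinAt
      (fun y _ => hd y) hnn htend
  · rw [integral_Ioi_of_hasDerivAt_of_nonneg hcont.continuousWithinAt
      (fun y _ => hd y) hnn htend, hF]
    ring


/-- Resolvent integral for Brownian motion reflected at 0, for 0 ≤ x < x₀:
∫₀^∞ e^{-αt} ∫_{x₀}^∞ y (e^{-(y-x)²/(2t)} + e^{-(y+x)²/(2t)})/√(2πt) dy dt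
  = (1/α)(1/(2√(2α)) + x₀/2) e^{-√(2α)x₀} (e^{√(2α)x} + e^{-√(2α)x}). -/
theorem stmt14 (α x x₀ : ℝ) (hα : 0 < α) (hx : 0 ≤ x) (hxx₀ : x < x₀) :
    ∫ t in Ioi (0:ℝ), Real.exp (-α * t) *
        ∫ y in Ioi x₀,
          y * (Real.exp (-(y - x) ^ 2 / (2 * t)) + Real.exp (-(y + x) ^ 2 / (2 * t)))
            / Real.sqrt (2 * π * t)
      = (1 / α) * (1 / (2 * Real.sqrt (2 * α)) + x₀ / 2)
          * Real.exp (-Real.sqrt (2 * α) * x₀)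
          * (Real.exp (Real.sqrt (2 * α) * x) + Real.exp (-Real.sqrt (2 * α) * x)) := by
  have h2α : (0:ℝ) < 2*α := by linarith
  set c := Real.sqrt (2*α) with hcdef
  have hc : 0 < c := Real.sqrt_pos.2 h2α
  have hc2 : c^2 = 2*α := Real.sq_sqrt h2α.le
  have hx₀ : 0 < x₀ := lt_of_le_of_lt hx hxx₀
  set H : ℝ → ℝ → ℝ := fun t y =>
    Real.exp (-α * t) * (y * (Real.exp (-(y - x) ^ 2 / (2 * t))
      + Real.exp (-(y + x) ^ 2 / (2 * t))) / Real.sqrt (2 * π * t)) with hHdef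
  have hslice : ∀ t y : ℝ, H t y =
      y * (Real.exp (-(α*t) - (y-x)^2/(2*t)) / Real.sqrt (2*π*t)
         + Real.exp (-(α*t) - (y+x)^2/(2*t)) / Real.sqrt (2*π*t)) := by
    intro t y
    rw [hHdef]
    simp only
    rw [show -(α*t) - (y-x)^2/(2*t) = (-α*t) + (-(y-x)^2/(2*t)) by ring, Real.exp_add,
        show -(α*t) - (y+x)^2/(2*t) = (-α*t) + (-(y+x)^2/(2*t)) by ring, Real.exp_add]
    ring
  have hIy : ∀ y ∈ Ioi x₀, IntegrableOn (fun t => H t y) (Ioi (0:ℝ)) := by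
    intro y hy
    have hy0 : x₀ < y := hy
    have L1 := (laplace α (y - x) hα (by linarith)).1
    have L2 := (laplace α (y + x) hα (by linarith)).1
    exact ((L1.add L2).const_mul y).congr
      (Filter.Eventually.of_forall fun t => (hslice t y).symm)
  have hval : ∀ y ∈ Ioi x₀, (∫ t in Ioi (0:ℝ), H t y)
      = y * (Real.exp (-(c*(y-x))) + Real.exp (-(c*(y+x)))) / c := by
    intro y hy
    have hy0 : x₀ < y := hy
    have L1 := laplace α (y - x) hα (by linarith)
    have L2 := laplace α (y + x) hα (by linarith)
    simp only [hslice]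
    rw [integral_const_mul, integral_add L1.1 L2.1, L1.2, L2.2, ← hcdef]
    ring
  have hmeas : AEStronglyMeasurable (Function.uncurry H)
      ((volume.restrict (Ioi (0:ℝ))).prod (volume.restrict (Ioi x₀))) := by
    rw [hHdef]
    apply Measurable.aestronglyMeasurable
    have m1 : Measurable fun z : ℝ × ℝ => Real.exp (-α * z.1) :=
      (measurable_const.mul measurable_fst).exp
    have m2 : Measurable fun z : ℝ × ℝ => Real.exp (-(z.2 - x)^2/(2*z.1)) :=
      ((((measurable_snd.sub measurable_const).pow_const 2).neg).div
        (measurable_const.mul measurable_fst)).exp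
    have m3 : Measurable fun z : ℝ × ℝ => Real.exp (-(z.2 + x)^2/(2*z.1)) :=
      ((((measurable_snd.add measurable_const).pow_const 2).neg).div
        (measurable_const.mul measurable_fst)).exp
    have m4 : Measurable fun z : ℝ × ℝ => Real.sqrt (2 * π * z.1) :=
      Real.continuous_sqrt.measurable.comp (measurable_const.mul measurable_fst)
    exact m1.mul ((measurable_snd.mul (m2.add m3)).div m4)
  have hptφ : ∀ y : ℝ, y * (Real.exp (-(c*(y-x))) + Real.exp (-(c*(y+x)))) / c
      = ((Real.exp (c*x) + Real.exp (-(c*x)))/c) * (y * Real.exp (-(c*y))) := by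
    intro y
    rw [show -(c*(y-x)) = c*x + -(c*y) by ring, Real.exp_add,
        show -(c*(y+x)) = -(c*x) + -(c*y) by ring, Real.exp_add]
    ring
  have hφint : IntegrableOn
      (fun y => y * (Real.exp (-(c*(y-x))) + Real.exp (-(c*(y+x)))) / c) (Ioi x₀) := by
    have hm := ((exp_moment c x₀ hc hx₀.le).1.const_mul
      ((Real.exp (c*x) + Real.exp (-(c*x)))/c))
    exact hm.congr (Filter.Eventually.of_forall fun y => (hptφ y).symm)
  have hnormint : Integrable (fun y => ∫ t, ‖H t y‖ ∂(volume.restrict (Ioi (0:ℝ))))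
      (volume.restrict (Ioi x₀)) := by
    apply hφint.congr
    filter_upwards [ae_restrict_mem measurableSet_Ioi] with y hy
    have hy0 : (0:ℝ) < y := lt_trans hx₀ hy
    have h1 : (∫ t, ‖H t y‖ ∂(volume.restrict (Ioi (0:ℝ)))) = ∫ t in Ioi (0:ℝ), H t y := by
      apply setIntegral_congr_fun measurableSet_Ioi
      intro t ht
      have ht0 : (0:ℝ) < t := ht
      rw [hHdef]
      exact Real.norm_of_nonneg (by positivity)
    rw [h1, hval y hy]
  have hint : Integrable (Function.uncurry H)
      ((volume.restrict (Ioi (0:ℝ))).prod (volume.restrict (Ioi x₀))) := by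
    rw [integrable_prod_iff' hmeas]
    constructor
    · filter_upwards [ae_restrict_mem measurableSet_Ioi] with y hy
      exact hIy y hy
    · exact hnormint
  have hL : (∫ t in Ioi (0:ℝ), Real.exp (-α * t) *
        ∫ y in Ioi x₀,
          y * (Real.exp (-(y - x) ^ 2 / (2 * t)) + Real.exp (-(y + x) ^ 2 / (2 * t)))
            / Real.sqrt (2 * π * t))
      = ∫ t in Ioi (0:ℝ), ∫ y in Ioi x₀, H t y := by
    refine setIntegral_congr_fun measurableSet_Ioi (fun t _ => ?_)
    rw [hHdef]
    exact (integral_const_mul _ _).symm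
  rw [hL, integral_integral_swap hint,
    setIntegral_congr_fun measurableSet_Ioi (fun y hy => hval y hy),
    setIntegral_congr_fun measurableSet_Ioi (fun y (_ : y ∈ Ioi x₀) => hptφ y),
    integral_const_mul, (exp_moment c x₀ hc hx₀.le).2]
  simp only [neg_mul]
  have hα1 : (1:ℝ)/α = 2/c^2 := by rw [hc2]; ring
  rw [hα1]
  field_simp
  ring
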